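/- Let K : [a,b] → ℝ be defined by K(t) = t - a for t ∈ [a,x], K(t) = t - (a+b)/2 for t ∈ (x, a+b-x], and K(t) = t - b for t ∈ (a+b-x, b], where x ∈ [a, (a+b)/2]. Then ∫_a^b |K(t)|·|t - (a+b)/2| dt = (a+3b-4x)(x-a)²/6 + (2/3)((a+b)/2 - x)³. -/

import Mathlib

open MeasureTheory Set
open scoped Interval

lemma quad_int (c d p q : ℝ) :
    ∫ t in c..d, (t - p) * (t - q)
      = (d^3 - c^3)/3 - (p+q)*(d^2-c^2)/2 + p*q*(d-c) := by
  have h : ∀ t : ℝ, HasDerivAt (fun t : ℝ => t^3/3 - (p+q)*t^2/2 + p*q*t)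
      ((t - p) * (t - q)) t := by
    intro t
    have h1 := (((hasDerivAt_pow 3 t).div_const 3).sub
      (((hasDerivAt_pow 2 t).const_mul (p+q)).div_const 2)).add
      ((hasDerivAt_id t).const_mul (p*q))
    exact h1.congr_deriv (by push_cast; ring)
  rw [intervalIntegral.integral_eq_sub_of_hasDerivAt (fun t _ => h t)
    (((continuous_id.sub continuous_const).mul
      (continuous_id.sub continuous_const)).intervalIntegrable c d)]
  ring

theorem kernel_abs_integral
    (a b : ℝ) (hab : a < b) (x : ℝ) (hx : x ∈ Icc a ((a + b)/2))
    (K : ℝ → ℝ)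
    (hK : ∀ t, K t = if t ≤ x then t - a
                     else if t ≤ a + b - x then t - (a + b)/2
                     else t - b) :
    ∫ t in a..b, |K t| * |t - (a + b)/2|
    = (a + 3*b - 4*x) * (x - a)^2 / 6 + (2/3) * ((a + b)/2 - x)^3 := by
  obtain ⟨hax, hxm⟩ := hx
  set m : ℝ := (a + b)/2 with hm
  set y : ℝ := a + b - x with hy
  have hmy : m ≤ y := by simp only [hm, hy]; linarith
  have hyb : y ≤ b := by simp only [hy]; linarith
  have ham : a ≤ m := by simp only [hm]; linarith
  -- pointwise descriptions on each open-closed piece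
  have e1 : ∀ t ∈ Ι a x, |K t| * |t - m| = -((t - a) * (t - m)) := by
    rw [uIoc_of_le hax]
    rintro t ⟨h1, h2⟩
    rw [hK t, if_pos h2, abs_of_nonneg (by linarith), abs_of_nonpos (by linarith)]
    ring
  have e2 : ∀ t ∈ Ι x m, |K t| * |t - m| = (t - m) * (t - m) := by
    rw [uIoc_of_le hxm]
    rintro t ⟨h1, h2⟩
    rw [hK t, if_neg (by linarith), if_pos (by simp only [hy]; linarith),
      abs_mul_abs_self]
  have e3 : ∀ t ∈ Ι m y, |K t| * |t - m| = (t - m) * (t - m) := by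
    rw [uIoc_of_le hmy]
    rintro t ⟨h1, h2⟩
    rw [hK t, if_neg (by linarith), if_pos (by simpa [hy] using h2),
      abs_mul_abs_self]
  have e4 : ∀ t ∈ Ι y b, |K t| * |t - m| = -((t - b) * (t - m)) := by
    rw [uIoc_of_le hyb]
    rintro t ⟨h1, h2⟩
    rw [hK t, if_neg (by simp only [hy] at h1 ⊢; linarith),
      if_neg (by simpa [hy] using h1),
      abs_of_nonpos (by linarith), abs_of_nonneg (by simp only [hm, hy] at h1 ⊢; linarith)]
    ring
  have cont : ∀ p q : ℝ, Continuous fun t : ℝ => (t - p) * (t - q) :=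
    fun p q => (continuous_id.sub continuous_const).mul (continuous_id.sub continuous_const)
  have mk_ae : ∀ (c d : ℝ) (g : ℝ → ℝ), (∀ t ∈ Ι c d, |K t| * |t - m| = g t) →
      (fun t => |K t| * |t - m|) =ᵐ[volume.restrict (Ι c d)] g := by
    intro c d g h
    filter_upwards [ae_restrict_mem measurableSet_uIoc] with t ht using h t ht
  have i1 : IntervalIntegrable (fun t => |K t| * |t - m|) volume a x :=
    (((cont a m).neg.intervalIntegrable a x).congr_ae (mk_ae a x _ e1).symm)
  have i2 : IntervalIntegrable (fun t => |K t| * |t - m|) volume x m :=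
    (((cont m m).intervalIntegrable x m).congr_ae (mk_ae x m _ e2).symm)
  have i3 : IntervalIntegrable (fun t => |K t| * |t - m|) volume m y :=
    (((cont m m).intervalIntegrable m y).congr_ae (mk_ae m y _ e3).symm)
  have i4 : IntervalIntegrable (fun t => |K t| * |t - m|) volume y b :=
    (((cont b m).neg.intervalIntegrable y b).congr_ae (mk_ae y b _ e4).symm)
  have split : ∫ t in a..b, |K t| * |t - m|
      = (∫ t in a..x, |K t| * |t - m|) + ((∫ t in x..m, |K t| * |t - m|)
        + ((∫ t in m..y, |K t| * |t - m|) + (∫ t in y..b, |K t| * |t - m|))) := by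
    rw [intervalIntegral.integral_add_adjacent_intervals i3 i4,
      intervalIntegral.integral_add_adjacent_intervals i2 (i3.trans i4),
      intervalIntegral.integral_add_adjacent_intervals i1 ((i2.trans i3).trans i4)]
  rw [split,
    intervalIntegral.integral_congr_ae (Filter.Eventually.of_forall e1),
    intervalIntegral.integral_congr_ae (Filter.Eventually.of_forall e2),
    intervalIntegral.integral_congr_ae (Filter.Eventually.of_forall e3),
    intervalIntegral.integral_congr_ae (Filter.Eventually.of_forall e4),
    intervalIntegral.integral_neg, intervalIntegral.integral_neg,
    quad_int, quad_int, quad_int, quad_int]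
  simp only [hm, hy]
  ring
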